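/- Let V be a finite-dimensional real vector space, γ a symmetric bilinear form on V with kernel spanned by a nonzero vector v⁰, and ξ : V → V a linear map with ξ v⁰ = 0 and γ(ξu, v) + γ(u, ξv) = 0 for all u, v. Let V₀ be the generalized eigenspace of ξ for eigenvalue 0 and U the sum of the generalized eigenspaces for nonzero (complex) eigenvalues, so V = V₀ ⊕ U. Then V₀ and U are γ-orthogonal, v⁰ ∈ V₀, and the restriction of γ to U is nondegenerate. -/

import Mathlib

theorem stmt_5 (V : Type*) [AddCommGroup V] [Module ℝ V] [FiniteDimensional ℝ V]
    (γ : V →ₗ[ℝ] V →ₗ[ℝ] ℝ) (hγsymm : ∀ u v, γ u v = γ v u)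
    (v0 : V) (hv0 : v0 ≠ 0)
    (hker : LinearMap.ker γ = Submodule.span ℝ {v0})
    (ξ : V →ₗ[ℝ] V) (hξv0 : ξ v0 = 0)
    (hskew : ∀ u v, γ (ξ u) v + γ u (ξ v) = 0) :
    -- V₀ = generalized eigenspace for 0, U = intersection of ranges of powers
    IsCompl (⨆ k : ℕ, LinearMap.ker (ξ ^ k)) (⨅ k : ℕ, LinearMap.range (ξ ^ k)) ∧
    (∀ u ∈ (⨆ k : ℕ, LinearMap.ker (ξ ^ k)),
      ∀ w ∈ (⨅ k : ℕ, LinearMap.range (ξ ^ k)), γ u w = 0) ∧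
    v0 ∈ (⨆ k : ℕ, LinearMap.ker (ξ ^ k)) ∧
    (∀ u ∈ (⨅ k : ℕ, LinearMap.range (ξ ^ k)),
      (∀ w ∈ (⨅ k : ℕ, LinearMap.range (ξ ^ k)), γ u w = 0) → u = 0) := by
  have hcompl := LinearMap.isCompl_iSup_ker_pow_iInf_range_pow ξ
  -- key identity
  have key : ∀ (n : ℕ) (u w : V), γ u ((ξ ^ n) w) = (-1 : ℝ) ^ n * γ ((ξ ^ n) u) w := by
    intro n
    induction n with
    | zero => simp
    | succ n ih =>
      intro u w
      have h1 : γ u (ξ ((ξ ^ n) w)) = - γ (ξ u) ((ξ ^ n) w) := by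
        have := hskew u ((ξ ^ n) w); linarith
      calc γ u ((ξ ^ (n+1)) w) = γ u (ξ ((ξ ^ n) w)) := by
            rw [pow_succ']; rfl
        _ = - γ (ξ u) ((ξ ^ n) w) := h1
        _ = - ((-1 : ℝ)^n * γ ((ξ ^ n) (ξ u)) w) := by rw [ih]
        _ = (-1 : ℝ) ^ (n+1) * γ ((ξ ^ (n+1)) u) w := by
            rw [show (ξ ^ n) (ξ u) = (ξ ^ (n+1)) u from by rw [pow_succ]; rfl]
            ring
  -- membership in the iSup via a specific kernel
  have hmem_iSup : ∀ u, u ∈ (⨆ k : ℕ, LinearMap.ker (ξ ^ k)) → ∃ n, (ξ ^ n) u = 0 := by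
    intro u hu
    have hdir : Directed (· ≤ ·) fun k : ℕ => LinearMap.ker (ξ ^ k) := by
      apply Monotone.directed_le
      intro i j hij
      intro x hx
      simp only [LinearMap.mem_ker] at hx ⊢
      obtain ⟨d, rfl⟩ := Nat.exists_eq_add_of_le hij
      rw [add_comm, pow_add]
      simp [Module.End.mul_apply, hx]
    rw [Submodule.mem_iSup_of_directed _ hdir] at hu
    obtain ⟨n, hn⟩ := hu
    exact ⟨n, hn⟩
  have horth : ∀ u ∈ (⨆ k : ℕ, LinearMap.ker (ξ ^ k)),
      ∀ w ∈ (⨅ k : ℕ, LinearMap.range (ξ ^ k)), γ u w = 0 := by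
    intro u hu w hw
    obtain ⟨n, hn⟩ := hmem_iSup u hu
    have hwn : w ∈ LinearMap.range (ξ ^ n) := Submodule.mem_iInf _ |>.mp hw n
    obtain ⟨w', rfl⟩ := hwn
    rw [key n u w', hγsymm, hn]
    simp
  refine ⟨hcompl, horth, ?_, ?_⟩
  · have : v0 ∈ LinearMap.ker (ξ ^ 1) := by simp [hξv0]
    exact Submodule.mem_iSup_of_mem 1 this
  · intro u hu hortho
    -- γ u is zero on all of V
    have hzero : ∀ z : V, γ u z = 0 := by
      intro z
      have hz : z ∈ (⨆ k : ℕ, LinearMap.ker (ξ ^ k)) ⊔ (⨅ k : ℕ, LinearMap.range (ξ ^ k)) := by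
        rw [codisjoint_iff.mp hcompl.codisjoint]; exact Submodule.mem_top
      obtain ⟨z₀, hz₀, z₁, hz₁, rfl⟩ := Submodule.mem_sup.mp hz
      rw [map_add]
      rw [hγsymm u z₀, horth z₀ hz₀ u hu, hortho z₁ hz₁, add_zero]
    have huker : u ∈ LinearMap.ker γ := by
      rw [LinearMap.mem_ker]; ext z; simpa using hzero z
    rw [hker, Submodule.mem_span_singleton] at huker
    obtain ⟨c, rfl⟩ := huker
    by_contra h
    have hc : c ≠ 0 := by rintro rfl; simp at h
    have hv0U : v0 ∈ (⨅ k : ℕ, LinearMap.range (ξ ^ k)) := by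
      have := Submodule.smul_mem _ c⁻¹ hu
      rwa [inv_smul_smul₀ hc] at this
    have hv0V0 : v0 ∈ (⨆ k : ℕ, LinearMap.ker (ξ ^ k)) :=
      Submodule.mem_iSup_of_mem 1 (by simp [hξv0])
    have : v0 = 0 := by
      have := hcompl.disjoint
      exact (Submodule.disjoint_def.mp this) v0 hv0V0 hv0U
    exact hv0 this
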